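/- In the discrete torus (ℤ/4ℤ)^n, every cube packing with 2^n - 2 cubes is extensible: there exists a cube disjoint from all cubes of the packing. -/

import Mathlib

set_option linter.unusedVariables false

/-- The cube `v + {0,1}^n` in the discrete torus `(ℤ/4ℤ)^n`. -/
def cube {n : ℕ} (v : Fin n → ZMod 4) : Set (Fin n → ZMod 4) :=
  {x | ∀ i, x i = v i ∨ x i = v i + 1}

namespace CubePack

variable {n : ℕ}

lemma piFinset_inter {m : ℕ} {α : Type*} [DecidableEq α] (f g : Fin m → Finset α) :
    Fintype.piFinset f ∩ Fintype.piFinset g = Fintype.piFinset (fun i => f i ∩ g i) := by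
  ext x; simp [Fintype.mem_piFinset, forall_and]

def cubeF (v : Fin n → ZMod 4) : Finset (Fin n → ZMod 4) :=
  Fintype.piFinset (fun i => {v i, v i + 1})

lemma mem_cubeF {v x : Fin n → ZMod 4} :
    x ∈ cubeF v ↔ ∀ i, x i = v i ∨ x i = v i + 1 := by
  simp [cubeF, Fintype.mem_piFinset]

lemma mem_cube_iff {v x : Fin n → ZMod 4} :
    x ∈ cube v ↔ ∀ i, x i = v i ∨ x i = v i + 1 := Iff.rfl

lemma mem_cubeF_iff_mem_cube {v x : Fin n → ZMod 4} : x ∈ cubeF v ↔ x ∈ cube v := by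
  rw [mem_cubeF]; rfl

lemma self_mem_cubeF (v : Fin n → ZMod 4) : v ∈ cubeF v :=
  mem_cubeF.2 fun i => Or.inl rfl

lemma card_cubeF (v : Fin n → ZMod 4) : (cubeF v).card = 2 ^ n := by
  rw [cubeF, Fintype.card_piFinset]
  have h : ∀ a : ZMod 4, ({a, a + 1} : Finset (ZMod 4)).card = 2 := by decide
  simp [h]

lemma card_inter_cubeF (u u' : Fin n → ZMod 4) :
    (cubeF u ∩ cubeF u').card
      = ∏ i, (({u i, u i + 1} ∩ {u' i, u' i + 1} : Finset (ZMod 4))).card := by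
  rw [cubeF, cubeF, piFinset_inter, Fintype.card_piFinset]

def IsPacking (P : Finset (Fin n → ZMod 4)) : Prop :=
  (P : Set (Fin n → ZMod 4)).Pairwise fun v w => Disjoint (cube v) (cube w)

def UF (P : Finset (Fin n → ZMod 4)) : Finset (Fin n → ZMod 4) :=
  Finset.univ \ P.biUnion cubeF

lemma mem_UF {P : Finset (Fin n → ZMod 4)} {x : Fin n → ZMod 4} :
    x ∈ UF P ↔ ∀ v ∈ P, x ∉ cubeF v := by
  simp [UF]

lemma card_univ_E : (Finset.univ : Finset (Fin n → ZMod 4)).card = 4 ^ n := by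
  simp [Finset.card_univ]

lemma card_UF {P : Finset (Fin n → ZMod 4)} (hP : IsPacking P) :
    (UF P).card + P.card * 2 ^ n = 4 ^ n := by
  have hdisj : ∀ v ∈ P, ∀ w ∈ P, v ≠ w → Disjoint (cubeF v) (cubeF w) := by
    intro v hv w hw hvw
    have := hP hv hw hvw
    rw [Finset.disjoint_left]
    intro x hx hx'
    exact Set.disjoint_left.1 this (mem_cubeF_iff_mem_cube.1 hx) (mem_cubeF_iff_mem_cube.1 hx')
  have hb : (P.biUnion cubeF).card = P.card * 2 ^ n := by
    rw [Finset.card_biUnion hdisj]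
    simp [card_cubeF, Finset.sum_const, mul_comm]
  have hsub : P.biUnion cubeF ⊆ Finset.univ := Finset.subset_univ _
  have h2 := Finset.card_sdiff_add_card_eq_card hsub
  rw [hb] at h2
  rw [UF, h2, ← card_univ_E (n := n)]

-- layer machinery
lemma mem_cubeF_split {v x : Fin (n+1) → ZMod 4} :
    x ∈ cubeF v ↔ (x 0 = v 0 ∨ x 0 = v 0 + 1) ∧ Fin.tail x ∈ cubeF (Fin.tail v) := by
  rw [mem_cubeF, mem_cubeF]
  constructor
  · intro h; exact ⟨h 0, fun i => h i.succ⟩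
  · rintro ⟨h0, ht⟩ i
    refine Fin.cases ?_ ?_ i
    · exact h0
    · exact fun j => ht j

lemma mem_cubeF_cons {v : Fin (n+1) → ZMod 4} {a : ZMod 4} {y : Fin n → ZMod 4} :
    Fin.cons a y ∈ cubeF v ↔ (a = v 0 ∨ a = v 0 + 1) ∧ y ∈ cubeF (Fin.tail v) := by
  rw [mem_cubeF_split]; simp

def layerP (P : Finset (Fin (n+1) → ZMod 4)) (a : ZMod 4) : Finset (Fin n → ZMod 4) :=
  (P.filter (fun v => a = v 0 ∨ a = v 0 + 1)).image Fin.tail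

def W (P : Finset (Fin (n+1) → ZMod 4)) (a : ZMod 4) : Finset (Fin n → ZMod 4) :=
  Finset.univ.filter (fun y => Fin.cons a y ∈ UF P)

lemma mem_W {P : Finset (Fin (n+1) → ZMod 4)} {a : ZMod 4} {y : Fin n → ZMod 4} :
    y ∈ W P a ↔ Fin.cons a y ∈ UF P := by
  simp [W]

lemma mem_UF_iff_tail {P : Finset (Fin (n+1) → ZMod 4)} {x : Fin (n+1) → ZMod 4} :
    x ∈ UF P ↔ Fin.tail x ∈ W P (x 0) := by
  rw [mem_W, Fin.cons_self_tail]

lemma W_eq_UF_layerP (P : Finset (Fin (n+1) → ZMod 4)) (a : ZMod 4) :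
    W P a = UF (layerP P a) := by
  ext y
  rw [mem_W, mem_UF, mem_UF]
  constructor
  · intro h u hu hy
    obtain ⟨v, hv, rfl⟩ := Finset.mem_image.1 hu
    obtain ⟨hvP, hcond⟩ := Finset.mem_filter.1 hv
    exact h v hvP (mem_cubeF_cons.2 ⟨hcond, hy⟩)
  · intro h v hv hmem
    obtain ⟨hcond, hy⟩ := mem_cubeF_cons.1 hmem
    exact h (Fin.tail v) (Finset.mem_image_of_mem _ (Finset.mem_filter.2 ⟨hv, hcond⟩)) hy

lemma layerP_isPacking {P : Finset (Fin (n+1) → ZMod 4)} (hP : IsPacking P) (a : ZMod 4) :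
    IsPacking (layerP P a) := by
  intro u hu u' hu' hne
  simp only [layerP, Finset.coe_image, Set.mem_image, Finset.mem_coe] at hu hu'
  obtain ⟨v, hv, rfl⟩ := hu
  obtain ⟨v', hv', rfl⟩ := hu'
  obtain ⟨hvP, hcond⟩ := Finset.mem_filter.1 hv
  obtain ⟨hvP', hcond'⟩ := Finset.mem_filter.1 hv'
  have hvv : v ≠ v' := by rintro rfl; exact hne rfl
  have hd := hP hvP hvP' hvv
  rw [Set.disjoint_left]
  intro y hy hy'
  have h1 : Fin.cons a y ∈ cube v := by
    have : Fin.cons a y ∈ cubeF v := mem_cubeF_cons.2 ⟨hcond, by rwa [mem_cubeF]⟩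
    rw [mem_cubeF] at this; exact this
  have h2 : Fin.cons a y ∈ cube v' := by
    have : Fin.cons a y ∈ cubeF v' := mem_cubeF_cons.2 ⟨hcond', by rwa [mem_cubeF]⟩
    rw [mem_cubeF] at this; exact this
  exact Set.disjoint_left.1 hd h1 h2

lemma card_layerP {P : Finset (Fin (n+1) → ZMod 4)} (hP : IsPacking P) (a : ZMod 4) :
    (layerP P a).card = (P.filter (fun v => a = v 0 ∨ a = v 0 + 1)).card := by
  apply Finset.card_image_of_injOn
  intro v hv v' hv' htail
  obtain ⟨hvP, hcond⟩ := Finset.mem_filter.1 hv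
  obtain ⟨hvP', hcond'⟩ := Finset.mem_filter.1 hv'
  by_contra hne
  have hd := hP hvP hvP' hne
  have h1 : Fin.cons a (Fin.tail v) ∈ cube v := by
    have : Fin.cons a (Fin.tail v) ∈ cubeF v :=
      mem_cubeF_cons.2 ⟨hcond, mem_cubeF.2 fun i => Or.inl rfl⟩
    rw [mem_cubeF] at this; exact this
  have h2 : Fin.cons a (Fin.tail v) ∈ cube v' := by
    have : Fin.cons a (Fin.tail v) ∈ cubeF v' :=
      mem_cubeF_cons.2 ⟨hcond', by rw [htail]; exact mem_cubeF.2 fun i => Or.inl rfl⟩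
    rw [mem_cubeF] at this; exact this
  exact Set.disjoint_left.1 hd h1 h2

lemma sum_card_layerP {P : Finset (Fin (n+1) → ZMod 4)} (hP : IsPacking P) :
    ∑ a : ZMod 4, (layerP P a).card = 2 * P.card := by
  have h2 : ∀ c : ZMod 4, (Finset.univ.filter (fun a : ZMod 4 => a = c ∨ a = c + 1)).card = 2 := by
    decide
  calc ∑ a : ZMod 4, (layerP P a).card
      = ∑ a : ZMod 4, ∑ v ∈ P, (if a = v 0 ∨ a = v 0 + 1 then 1 else 0) := by
        refine Finset.sum_congr rfl fun a _ => ?_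
        rw [card_layerP hP a, Finset.card_filter]
    _ = ∑ v ∈ P, ∑ a : ZMod 4, (if a = v 0 ∨ a = v 0 + 1 then 1 else 0) := Finset.sum_comm
    _ = ∑ v ∈ P, 2 := by
        refine Finset.sum_congr rfl fun v _ => ?_
        rw [← Finset.card_filter]
        exact h2 (v 0)
    _ = 2 * P.card := by rw [Finset.sum_const, smul_eq_mul, mul_comm]

-- key combinatorial lemma P1
lemma W_step {P : Finset (Fin (n+1) → ZMod 4)} (hP : IsPacking P) {a : ZMod 4}
    {y : Fin n → ZMod 4} (h1 : y ∈ W P a) (h2 : y ∉ W P (a+1)) : y ∈ W P (a-1) := by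
  rw [mem_W, mem_UF] at h1 ⊢
  rw [mem_W, mem_UF] at h2
  push_neg at h2
  obtain ⟨v, hv, hmem⟩ := h2
  obtain ⟨hc, hy⟩ := mem_cubeF_cons.1 hmem
  have hc' : a + 1 = v 0 := by
    rcases hc with hc | hc
    · exact hc
    · exfalso
      have ha : a = v 0 := by
        have : a + 1 - 1 = v 0 + 1 - 1 := by rw [hc]
        simpa using this
      exact h1 v hv (mem_cubeF_cons.2 ⟨Or.inl ha, hy⟩)
  intro v' hv' hmem'
  obtain ⟨hc2, hy2⟩ := mem_cubeF_cons.1 hmem'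
  rcases hc2 with hc2 | hc2
  · -- a - 1 = v' 0, then cons a y ∈ cube v'
    refine h1 v' hv' (mem_cubeF_cons.2 ⟨Or.inr ?_, hy2⟩)
    rw [← hc2]; ring
  · -- v' 0 = a - 2 = a + 2 ; common point cons (a+2) y in cube v and cube v'
    have hv0 : v' 0 = a + 2 := by
      have : a - 1 - 1 = v' 0 + 1 - 1 := by rw [hc2]
      have h' : v' 0 = a - 2 := by linear_combination -this
      rw [h']
      exact (by decide : ∀ b : ZMod 4, b - 2 = b + 2) a
    have hvv : v ≠ v' := by
      intro h
      rw [← h, ← hc'] at hv0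
      exact (by decide : ∀ b : ZMod 4, b + 1 ≠ b + 2) a hv0
    have hd := hP hv hv' hvv
    have m1 : Fin.cons (a+2) y ∈ cube v := by
      have : Fin.cons (a+2) y ∈ cubeF v :=
        mem_cubeF_cons.2 ⟨Or.inr (by rw [← hc']; ring), hy⟩
      rw [mem_cubeF] at this; exact this
    have m2 : Fin.cons (a+2) y ∈ cube v' := by
      have : Fin.cons (a+2) y ∈ cubeF v' := mem_cubeF_cons.2 ⟨Or.inl hv0.symm, hy2⟩
      rw [mem_cubeF] at this; exact this
    exact Set.disjoint_left.1 hd m1 m2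

lemma sum_zmod4 (f : ZMod 4 → ℕ) : ∑ a : ZMod 4, f a = f 0 + f 1 + f 2 + f 3 := by
  have h : (Finset.univ : Finset (ZMod 4)) = {0, 1, 2, 3} := by decide
  rw [h, Finset.sum_insert (by decide), Finset.sum_insert (by decide),
      Finset.sum_insert (by decide), Finset.sum_singleton]
  ring

lemma sum_zmod4' (f : ZMod 4 → ℕ) (z : ZMod 4) :
    ∑ a : ZMod 4, f a = f z + f (z+1) + f (z+2) + f (z+3) := by
  rw [← Equiv.sum_comp (Equiv.addLeft z) f]
  have := sum_zmod4 (fun a => f (z + a))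
  simpa using this

lemma four_pow (m : ℕ) : (4:ℕ) ^ m = 2 ^ m * 2 ^ m := by
  rw [show (4:ℕ) = 2 * 2 from rfl, mul_pow]

lemma exists_d {P : Finset (Fin (n+1) → ZMod 4)} (hP : IsPacking P) (a : ZMod 4) :
    ∃ d, (W P a).card = d * 2 ^ n ∧ d + (layerP P a).card = 2 ^ n := by
  have hpack := layerP_isPacking hP a
  have hc := card_UF hpack
  rw [← W_eq_UF_layerP] at hc
  set m := (layerP P a).card with hm
  have hm_le : m ≤ 2 ^ n := by
    have h1 : m * 2 ^ n ≤ 2 ^ n * 2 ^ n := by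
      rw [← four_pow]; omega
    have h2 : (0:ℕ) < 2 ^ n := Nat.pow_pos (by norm_num)
    exact Nat.le_of_mul_le_mul_right (by rwa [mul_comm (2^n) (2^n)] at h1) h2
  refine ⟨2 ^ n - m, ?_, by omega⟩
  have h3 : (2 ^ n - m) * 2 ^ n = 2 ^ n * 2 ^ n - m * 2 ^ n := Nat.sub_mul _ _ _
  rw [four_pow] at hc
  omega

lemma sum_W_card {P : Finset (Fin (n+1) → ZMod 4)} (hP : IsPacking P) :
    (∑ a : ZMod 4, (W P a).card) + 2 * P.card * 2 ^ n = 4 * 4 ^ n := by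
  have : ∀ a : ZMod 4, (W P a).card + (layerP P a).card * 2 ^ n = 4 ^ n := by
    intro a
    rw [W_eq_UF_layerP]
    exact card_UF (layerP_isPacking hP a)
  have hsum : ∑ a : ZMod 4, ((W P a).card + (layerP P a).card * 2 ^ n) = 4 * 4 ^ n := by
    rw [Finset.sum_congr rfl (fun a _ => this a)]
    simp [Finset.sum_const, Finset.card_univ]
  rw [Finset.sum_add_distrib, ← Finset.sum_mul, sum_card_layerP hP] at hsum
  omega

def ThmAStatement (m : ℕ) : Prop :=
  ∀ P : Finset (Fin m → ZMod 4), IsPacking P → P.card + 1 = 2 ^ m → ∃ w, UF P = cubeF w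

def ThmBStatement (m : ℕ) : Prop :=
  ∀ P : Finset (Fin m → ZMod 4), IsPacking P → P.card + 2 = 2 ^ m → ∃ w, cubeF w ⊆ UF P

lemma sum_d {P : Finset (Fin (n+1) → ZMod 4)} (hP : IsPacking P) (d : ZMod 4 → ℕ)
    (hdW : ∀ a, (W P a).card = d a * 2 ^ n) (k : ℕ) (hcard : P.card + k = 2 ^ (n+1)) :
    ∑ a : ZMod 4, d a = 2 * k := by
  have hX : (0:ℕ) < 2 ^ n := Nat.pow_pos (by norm_num)
  apply Nat.eq_of_mul_eq_mul_right hX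
  have hS : (∑ a : ZMod 4, d a) * 2 ^ n = ∑ a : ZMod 4, (W P a).card := by
    rw [Finset.sum_mul]
    exact Finset.sum_congr rfl fun a _ => (hdW a).symm
  rw [hS]
  have hsum := sum_W_card hP
  have h4 : (4:ℕ) ^ n = 2 ^ n * 2 ^ n := four_pow n
  have h2 : (2:ℕ) ^ (n+1) = 2 * 2 ^ n := by rw [pow_succ]; ring
  have hsum' : (↑(∑ a : ZMod 4, (W P a).card) : ℤ) + 2 * P.card * 2 ^ n = 4 * 4 ^ n := by
    exact_mod_cast congrArg (Nat.cast : ℕ → ℤ) hsum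
  have hcard' : (P.card : ℤ) + k = 2 ^ (n+1) := by exact_mod_cast congrArg (Nat.cast : ℕ → ℤ) hcard
  have h4' : ((4:ℤ)) ^ n = 2 ^ n * 2 ^ n := by exact_mod_cast h4
  have h2' : ((2:ℤ)) ^ (n+1) = 2 * 2 ^ n := by exact_mod_cast h2
  have : (↑(∑ a : ZMod 4, (W P a).card) : ℤ) = 2 * k * 2 ^ n := by
    linear_combination hsum' - 2*(2:ℤ)^n*hcard' + 4*h4' + 2*(2:ℤ)^n*h2'
  exact_mod_cast this

lemma exists_boundary {P : Finset (Fin (n+1) → ZMod 4)}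
    (h1 : ∃ z, W P z = ∅) (h2 : ∃ c, W P c ≠ ∅) :
    ∃ z, W P z = ∅ ∧ W P (z-1) ≠ ∅ := by
  obtain ⟨z, hz⟩ := h1
  obtain ⟨c, hc⟩ := h2
  by_cases e1 : W P (z-1) = ∅
  · by_cases e2 : W P (z-2) = ∅
    · by_cases e3 : W P (z-3) = ∅
      · exfalso
        have : c = z ∨ c = z - 1 ∨ c = z - 2 ∨ c = z - 3 := by
          have : ∀ a b : ZMod 4, a = b ∨ a = b - 1 ∨ a = b - 2 ∨ a = b - 3 := by decide
          exact this c z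
        rcases this with rfl | rfl | rfl | rfl <;> [exact hc hz; exact hc e1; exact hc e2;
          exact hc e3]
      · exact ⟨z - 2, e2, by rwa [show z - 2 - 1 = z - 3 by ring]⟩
    · exact ⟨z - 1, e1, by rwa [show z - 1 - 1 = z - 2 by ring]⟩
  · exact ⟨z, hz, e1⟩

lemma buildW {P : Finset (Fin (n+1) → ZMod 4)} {z : ZMod 4} {u : Fin n → ZMod 4}
    (h1 : cubeF u ⊆ W P (z-1)) (h2 : W P (z-1) ⊆ W P (z-2)) :
    cubeF (Fin.cons (z-2) u) ⊆ UF P := by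
  intro x hx
  rw [mem_cubeF_split] at hx
  obtain ⟨h0, ht⟩ := hx
  rw [Fin.tail_cons] at ht
  simp only [Fin.cons_zero] at h0
  rw [mem_UF_iff_tail]
  rcases h0 with h0 | h0
  · rw [h0]; exact h2 (h1 ht)
  · rw [h0, show z - 2 + 1 = z - 1 by ring]; exact h1 ht

lemma W_subset_of_next_empty {P : Finset (Fin (n+1) → ZMod 4)} (hP : IsPacking P)
    {z : ZMod 4} (hz : W P z = ∅) : W P (z-1) ⊆ W P (z-2) := by
  intro y hy
  have : y ∉ W P (z - 1 + 1) := by rw [show z - 1 + 1 = z by ring, hz]; simp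
  have := W_step hP hy this
  rwa [show z - 1 - 1 = z - 2 by ring] at this

lemma caseI (hA : ThmAStatement n) (hB : ThmBStatement n)
    {P : Finset (Fin (n+1) → ZMod 4)} (hP : IsPacking P)
    (hcard : P.card + 2 = 2 ^ (n+1)) (hex : ∃ z, W P z = ∅) :
    ∃ w, cubeF w ⊆ UF P := by
  have hX : (0:ℕ) < 2 ^ n := Nat.pow_pos (by norm_num)
  have hd := fun a => exists_d hP a
  choose d hdW hdm using hd
  have hsum : ∑ a : ZMod 4, d a = 4 := sum_d hP d hdW 2 hcard
  have hne : ∃ c, W P c ≠ ∅ := by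
    by_contra hall
    push_neg at hall
    have : ∀ a : ZMod 4, d a = 0 := by
      intro a
      have h := hdW a
      rw [hall a] at h
      simp only [Finset.card_empty] at h
      rcases Nat.mul_eq_zero.mp h.symm with h' | h'
      · exact h'
      · omega
    rw [Finset.sum_congr rfl fun a _ => this a] at hsum
    simp at hsum
  obtain ⟨z, hz, hz'⟩ := exists_boundary hex hne
  have hsub : W P (z-1) ⊆ W P (z-2) := W_subset_of_next_empty hP hz
  have hd1 : 1 ≤ d (z-1) := by
    by_contra h
    push_neg at h
    have h0 : d (z-1) = 0 := by omega
    apply hz'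
    have hc := hdW (z-1)
    rw [h0, zero_mul] at hc
    exact Finset.card_eq_zero.1 hc
  have hle : d (z-1) ≤ d (z-2) := by
    have hc := Finset.card_le_card hsub
    rw [hdW (z-1), hdW (z-2)] at hc
    exact Nat.le_of_mul_le_mul_right hc hX
  have hz0 : d z = 0 := by
    have h := hdW z
    rw [hz] at h
    simp only [Finset.card_empty] at h
    rcases Nat.mul_eq_zero.mp h.symm with h' | h'
    · exact h'
    · omega
  have hsum4 := (sum_zmod4' d z).symm.trans hsum
  have e3 : z - 1 = z + 3 := (by decide : ∀ b : ZMod 4, b - 1 = b + 3) z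
  have e2 : z - 2 = z + 2 := (by decide : ∀ b : ZMod 4, b - 2 = b + 2) z
  rw [e3] at hd1
  rw [e3, e2] at hle
  have hcases : d (z+3) = 1 ∨ d (z+3) = 2 := by omega
  have hpack := layerP_isPacking hP (z-1)
  rcases hcases with h1 | h1
  · have hm : (layerP P (z-1)).card + 1 = 2 ^ n := by
      have := hdm (z-1); rw [← e3] at h1; omega
    obtain ⟨u, hu⟩ := hA (layerP P (z-1)) hpack hm
    refine ⟨Fin.cons (z-2) u, buildW ?_ hsub⟩
    rw [W_eq_UF_layerP, hu]
  · have hm : (layerP P (z-1)).card + 2 = 2 ^ n := by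
      have := hdm (z-1); rw [← e3] at h1; omega
    obtain ⟨u, hu⟩ := hB (layerP P (z-1)) hpack hm
    refine ⟨Fin.cons (z-2) u, buildW ?_ hsub⟩
    rwa [W_eq_UF_layerP]

lemma zmod4_cover (a b : ZMod 4) : a = b ∨ a = b + 1 ∨ a = b + 2 ∨ a = b + 3 := by
  revert a b; decide

lemma thmA : ∀ m, ThmAStatement m := by
  intro m
  induction m with
  | zero =>
    intro P hpack hcard
    have hP0 : P = ∅ := by
      have : P.card = 0 := by simpa using hcard
      exact Finset.card_eq_zero.1 this
    refine ⟨fun _ => 0, ?_⟩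
    subst hP0
    ext x
    rw [mem_UF, mem_cubeF]
    simp
  | succ n ih =>
    intro P hpack hcard
    have hX : (0:ℕ) < 2 ^ n := Nat.pow_pos (by norm_num)
    have hd := fun a => exists_d hpack a
    choose d hdW hdm using hd
    have hsum : ∑ a : ZMod 4, d a = 2 := sum_d hpack d hdW 1 hcard
    have hdzero : ∀ a, W P a = ∅ → d a = 0 := by
      intro a h
      have hc := hdW a
      rw [h] at hc
      simp only [Finset.card_empty] at hc
      rcases Nat.mul_eq_zero.mp hc.symm with h' | h'
      · exact h'
      · omega
    have hdpos : ∀ a, W P a ≠ ∅ → 1 ≤ d a := by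
      intro a h
      by_contra hlt
      push_neg at hlt
      have h0 : d a = 0 := by omega
      apply h
      have hc := hdW a
      rw [h0, zero_mul] at hc
      exact Finset.card_eq_zero.1 hc
    have hex : ∃ z, W P z = ∅ := by
      by_contra hall
      push_neg at hall
      have h4 := sum_zmod4 d
      have h0 := hdpos 0 (hall 0).ne_empty
      have h1 := hdpos 1 (hall 1).ne_empty
      have h2 := hdpos 2 (hall 2).ne_empty
      have h3 := hdpos 3 (hall 3).ne_empty
      omega
    have hne : ∃ c, W P c ≠ ∅ := by
      by_contra hall
      push_neg at hall
      have : ∑ a : ZMod 4, d a = 0 := by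
        rw [Finset.sum_congr rfl fun a _ => hdzero a (hall a)]
        simp
      omega
    obtain ⟨z, hz, hz'⟩ := exists_boundary hex hne
    have hsub : W P (z-1) ⊆ W P (z-2) := W_subset_of_next_empty hpack hz
    have hd1 : 1 ≤ d (z-1) := hdpos _ hz'
    have hle : d (z-1) ≤ d (z-2) := by
      have hc := Finset.card_le_card hsub
      rw [hdW (z-1), hdW (z-2)] at hc
      exact Nat.le_of_mul_le_mul_right hc hX
    have hz0 : d z = 0 := hdzero _ hz
    have hsum4 := (sum_zmod4' d z).symm.trans hsum
    have e3 : z - 1 = z + 3 := (by decide : ∀ b : ZMod 4, b - 1 = b + 3) z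
    have e2 : z - 2 = z + 2 := (by decide : ∀ b : ZMod 4, b - 2 = b + 2) z
    rw [e3] at hd1
    rw [e3, e2] at hle
    -- conclude d (z+3) = 1, d (z+2) = 1, d (z+1) = 0
    have hd3 : d (z+3) = 1 := by omega
    have hd2 : d (z+2) = 1 := by omega
    have hd1' : d (z+1) = 0 := by omega
    have hW1 : W P (z+1) = ∅ := by
      have hc := hdW (z+1)
      rw [hd1', zero_mul] at hc
      exact Finset.card_eq_zero.1 hc
    have hm : (layerP P (z-1)).card + 1 = 2 ^ n := by
      have := hdm (z-1)
      rw [e3] at *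
      omega
    obtain ⟨u, hu⟩ := ih (layerP P (z-1)) (layerP_isPacking hpack (z-1)) hm
    have hWcube : W P (z-1) = cubeF u := by rw [W_eq_UF_layerP, hu]
    have hWeq : W P (z-2) = cubeF u := by
      rw [← hWcube]
      refine (Finset.eq_of_subset_of_card_le hsub ?_).symm
      rw [hdW (z-1), hdW (z-2), e3, e2, hd3, hd2]
    refine ⟨Fin.cons (z-2) u, ?_⟩
    ext x
    rw [mem_UF_iff_tail, mem_cubeF_split]
    simp only [Fin.cons_zero, Fin.tail_cons]
    have hne1 : ¬ (z = z - 2) := (by decide : ∀ b : ZMod 4, ¬ (b = b - 2)) z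
    have hne2 : ¬ (z = z - 2 + 1) := (by decide : ∀ b : ZMod 4, ¬ (b = b - 2 + 1)) z
    have hne3 : ¬ (z + 1 = z - 2) := (by decide : ∀ b : ZMod 4, ¬ (b + 1 = b - 2)) z
    have hne4 : ¬ (z + 1 = z - 2 + 1) := (by decide : ∀ b : ZMod 4, ¬ (b + 1 = b - 2 + 1)) z
    have heq1 : z + 2 = z - 2 := e2.symm
    have heq2 : z + 3 = z - 2 + 1 := by
      rw [e3.symm]
      exact ((by decide : ∀ b : ZMod 4, b - 1 = b - 2 + 1) z)
    rcases zmod4_cover (x 0) z with h | h | h | h <;> rw [h]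
    · rw [hz]
      simp [hne1, hne2]
    · rw [hW1]
      simp [hne3, hne4]
    · rw [heq1, hWeq]
      simp
    · rw [heq2, show z - 2 + 1 = z - 1 by ring, hWcube]
      simp

-- cube intersection structure lemmas
lemma pair_card_le_two (a b : ZMod 4) :
    (({a, a+1} ∩ {b, b+1} : Finset (ZMod 4))).card ≤ 2 := by revert a b; decide

lemma pair_card_le_one (a b : ZMod 4) (h : b ≠ a) :
    (({a, a+1} ∩ {b, b+1} : Finset (ZMod 4))).card ≤ 1 := by revert a b; decide

lemma pair_card_struct (a b : ZMod 4) (h : b ≠ a)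
    (h1 : 1 ≤ (({a, a+1} ∩ {b, b+1} : Finset (ZMod 4))).card) :
    b = a + 1 ∨ b = a + 3 := by revert a b; decide

lemma pair_card_zero (a b : ZMod 4)
    (h : (({a, a+1} ∩ {b, b+1} : Finset (ZMod 4))).card = 0) : b = a + 2 := by
  revert a b; decide

lemma card_inter_le_half {m : ℕ} {u u' : Fin m → ZMod 4} (hne : u ≠ u') :
    (cubeF u ∩ cubeF u').card * 2 ≤ 2 ^ m := by
  obtain ⟨i, hi⟩ : ∃ i, u' i ≠ u i := by
    by_contra h
    push_neg at h
    exact hne (funext fun i => (h i).symm)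
  rw [card_inter_cubeF]
  set f := fun i : Fin m => (({u i, u i + 1} ∩ {u' i, u' i + 1} : Finset (ZMod 4))).card with hf
  have hsplit : ∏ k, f k = f i * ∏ k ∈ Finset.univ.erase i, f k :=
    (Finset.mul_prod_erase Finset.univ f (Finset.mem_univ i)).symm
  have h1 : f i ≤ 1 := pair_card_le_one _ _ hi
  have h2 : ∏ k ∈ Finset.univ.erase i, f k ≤ 2 ^ (Finset.univ.erase i).card :=
    Finset.prod_le_pow_card _ _ _ (fun k _ => pair_card_le_two _ _)
  have h3 : (Finset.univ.erase i).card + 1 = m := by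
    rw [Finset.card_erase_of_mem (Finset.mem_univ i), Finset.card_univ, Fintype.card_fin]
    have : 0 < m := i.pos
    omega
  calc (∏ k, f k) * 2 ≤ (1 * 2 ^ (Finset.univ.erase i).card) * 2 := by
        apply Nat.mul_le_mul_right
        rw [hsplit]
        exact Nat.mul_le_mul h1 h2
    _ = 2 ^ ((Finset.univ.erase i).card + 1) := by rw [one_mul, pow_succ]
    _ = 2 ^ m := by rw [h3]

lemma exists_single_coord {m : ℕ} {u u' : Fin m → ZMod 4} (hne : u ≠ u')
    (hcard : 2 ^ m ≤ (cubeF u ∩ cubeF u').card * 2) :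
    ∃ i, (u' i = u i + 1 ∨ u' i = u i + 3) ∧ ∀ k, k ≠ i → u' k = u k := by
  classical
  set f := fun i : Fin m => (({u i, u i + 1} ∩ {u' i, u' i + 1} : Finset (ZMod 4))).card with hf
  set S := Finset.univ.filter (fun i => u' i ≠ u i) with hS
  have hSne : S.Nonempty := by
    by_contra h
    rw [Finset.not_nonempty_iff_eq_empty] at h
    apply hne
    funext i
    by_contra hiu
    have : i ∈ S := Finset.mem_filter.2 ⟨Finset.mem_univ i, fun h' => hiu h'.symm⟩
    rw [h] at this
    simp at this
  have hprod : (cubeF u ∩ cubeF u').card = ∏ k, f k := card_inter_cubeF u u'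
  have hb : ∏ k, f k ≤ 2 ^ (Finset.univ.filter (fun i => ¬ u' i ≠ u i)).card := by
    rw [← Finset.prod_filter_mul_prod_filter_not Finset.univ (fun i => u' i ≠ u i) f]
    have e1 : ∏ k ∈ S, f k ≤ 1 := by
      apply Finset.prod_le_one
      · intro k _; exact Nat.zero_le _
      · intro k hk
        exact pair_card_le_one _ _ (by simpa [hS] using hk)
    have e2 : ∏ k ∈ Finset.univ.filter (fun i => ¬ u' i ≠ u i), f k
        ≤ 2 ^ (Finset.univ.filter (fun i => ¬ u' i ≠ u i)).card :=
      Finset.prod_le_pow_card _ _ _ (fun k _ => pair_card_le_two _ _)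
    calc (∏ k ∈ S, f k) * ∏ k ∈ Finset.univ.filter (fun i => ¬ u' i ≠ u i), f k
        ≤ 1 * (2 ^ (Finset.univ.filter (fun i => ¬ u' i ≠ u i)).card) := Nat.mul_le_mul e1 e2
      _ = _ := one_mul _
  have hcards : S.card + (Finset.univ.filter (fun i => ¬ u' i ≠ u i)).card = m := by
    rw [Finset.card_filter_add_card_filter_not (p := fun i => u' i ≠ u i)]
    simp
  have hSone : S.card = 1 := by
    by_contra hS1
    have hS2 : 2 ≤ S.card := by
      rcases hSne with ⟨x, hx⟩
      have := Finset.card_pos.2 ⟨x, hx⟩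
      omega
    have hmle : 2 ^ m ≤ 2 ^ ((Finset.univ.filter (fun i => ¬ u' i ≠ u i)).card + 1) := by
      calc 2 ^ m ≤ (∏ k, f k) * 2 := by rw [← hprod]; exact hcard
        _ ≤ 2 ^ (Finset.univ.filter (fun i => ¬ u' i ≠ u i)).card * 2 :=
            Nat.mul_le_mul_right _ hb
        _ = _ := (pow_succ 2 _).symm
    have := (Nat.pow_le_pow_iff_right (by norm_num : 1 < 2)).1 hmle
    omega
  obtain ⟨i, hi⟩ := Finset.card_eq_one.1 hSone
  have hiS : u' i ≠ u i := by
    have : i ∈ S := hi ▸ Finset.mem_singleton_self i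
    simpa [hS] using this
  have hoff : ∀ k, k ≠ i → u' k = u k := by
    intro k hk
    by_contra hkk
    have : k ∈ S := by simp [hS, hkk]
    rw [hi] at this
    exact hk (Finset.mem_singleton.1 this)
  refine ⟨i, ?_, hoff⟩
  have hfi : 1 ≤ f i := by
    by_contra hfi
    push_neg at hfi
    have hfi0 : f i = 0 := by omega
    have : ∏ k, f k = 0 := by
      apply Finset.prod_eq_zero (Finset.mem_univ i) hfi0
    rw [← hprod] at this
    rw [this] at hcard
    have hpos : (0:ℕ) < 2 ^ m := Nat.pow_pos (by norm_num)
    omega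
  exact pair_card_struct _ _ hiS hfi

lemma exists_diff_two {m : ℕ} {u u' : Fin m → ZMod 4}
    (h : cubeF u ∩ cubeF u' = ∅) : ∃ i, u' i = u i + 2 := by
  have hc : (cubeF u ∩ cubeF u').card = 0 := by rw [h]; rfl
  rw [card_inter_cubeF] at hc
  obtain ⟨i, _, hi⟩ := Finset.prod_eq_zero_iff.1 hc
  exact ⟨i, pair_card_zero _ _ hi⟩

-- permutation transport
section Perm
variable {m : ℕ} (σ : Equiv.Perm (Fin m))

lemma mem_cubeF_comp {v x : Fin m → ZMod 4} :
    x ∈ cubeF (v ∘ σ) ↔ (x ∘ σ.symm) ∈ cubeF v := by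
  rw [mem_cubeF, mem_cubeF]
  constructor
  · intro h k
    have := h (σ.symm k)
    simpa [Function.comp] using this
  · intro h i
    have := h (σ i)
    simpa [Function.comp] using this

lemma comp_injective : Function.Injective (fun v : Fin m → ZMod 4 => v ∘ σ) := by
  intro v w h
  funext k
  have := congrFun h (σ.symm k)
  simpa [Function.comp] using this

lemma isPacking_image {P : Finset (Fin m → ZMod 4)} (hP : IsPacking P) :
    IsPacking (P.image (fun v => v ∘ σ)) := by
  intro a ha b hb hab
  simp only [Finset.coe_image, Set.mem_image, Finset.mem_coe] at ha hb
  obtain ⟨v, hv, rfl⟩ := ha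
  obtain ⟨w, hw, rfl⟩ := hb
  have hvw : v ≠ w := by rintro rfl; exact hab rfl
  have hd := hP hv hw hvw
  rw [Set.disjoint_left]
  intro x hx hx'
  have h1 : x ∈ cubeF (v ∘ σ) := mem_cubeF.2 hx
  have h2 : x ∈ cubeF (w ∘ σ) := mem_cubeF.2 hx'
  rw [mem_cubeF_comp] at h1 h2
  exact Set.disjoint_left.1 hd (mem_cubeF.1 h1) (mem_cubeF.1 h2)

lemma mem_UF_image {P : Finset (Fin m → ZMod 4)} {x : Fin m → ZMod 4} :
    x ∈ UF (P.image (fun v => v ∘ σ)) ↔ (x ∘ σ.symm) ∈ UF P := by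
  rw [mem_UF, mem_UF]
  constructor
  · intro h v hv
    have := h (v ∘ σ) (Finset.mem_image_of_mem _ hv)
    rw [mem_cubeF_comp] at this
    exact this
  · intro h v' hv'
    obtain ⟨v, hv, rfl⟩ := Finset.mem_image.1 hv'
    rw [mem_cubeF_comp]
    exact h v hv

end Perm

lemma dec_n1 : ∀ t c α : ZMod 4, (α = 1 ∨ α = 3) → ¬(t = c ∨ t = c + 1) →
    ((∃ y, (y = t ∨ y = t + 1) ∧ (y = c ∨ y = c + 1)) ∨
     (∃ y, (y = t ∨ y = t + 1) ∧ (y = c + α ∨ y = c + α + 1))) := by decide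

lemma zmod4_cover0 (a : ZMod 4) : a = 0 ∨ a = 0 + 1 ∨ a = 0 + 1 + 1 ∨ a = 0 + 1 + 1 + 1 := by
  revert a; decide

lemma thmB : ∀ m, ThmBStatement m := by
  intro m
  induction m with
  | zero =>
    intro P hpack hcard
    simp at hcard
  | succ n ih =>
    intro P hpack hcard
    by_cases hPe : P = ∅
    · refine ⟨fun _ => 0, ?_⟩
      intro x hx
      rw [mem_UF]
      intro v hv
      rw [hPe] at hv
      simp at hv
    · have hPne : P.Nonempty := Finset.nonempty_of_ne_empty hPe
      have hn1 : 1 ≤ n := by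
        rcases Nat.eq_zero_or_pos n with h | h
        · subst h
          have : P.card = 0 := by simpa using hcard
          exact absurd (Finset.card_eq_zero.1 this) hPe
        · exact h
      have hX : (0:ℕ) < 2 ^ n := Nat.pow_pos (by norm_num)
      by_cases hex : ∃ z, W P z = ∅
      · exact caseI (thmA n) ih hpack hcard hex
      push_neg at hex
      -- Case II: all layers have exactly one missing cube
      have hd := fun a => exists_d hpack a
      choose d hdW hdm using hd
      have hsum : ∑ a : ZMod 4, d a = 4 := sum_d hpack d hdW 2 hcard
      have hdpos : ∀ a, 1 ≤ d a := by
        intro a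
        by_contra hlt
        push_neg at hlt
        have h0 : d a = 0 := by omega
        apply (hex a).ne_empty
        have hc := hdW a
        rw [h0, zero_mul] at hc
        exact Finset.card_eq_zero.1 hc
      have d1 : ∀ a : ZMod 4, d a = 1 := by
        have h4 := sum_zmod4 d
        have g0 := hdpos 0
        have g1 := hdpos 1
        have g2 := hdpos 2
        have g3 := hdpos 3
        intro a
        rcases zmod4_cover a 0 with h | h | h | h <;>
          rw [h] <;>
          [skip; rw [show (0:ZMod 4) + 1 = 1 by decide];
           rw [show (0:ZMod 4) + 2 = 2 by decide];
           rw [show (0:ZMod 4) + 3 = 3 by decide]] <;> omega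
      have hucard : ∀ a : ZMod 4, (layerP P a).card + 1 = 2 ^ n := by
        intro a
        have h := hdm a
        rw [d1 a] at h
        omega
      have hthA := fun a : ZMod 4 =>
        thmA n (layerP P a) (layerP_isPacking hpack a) (hucard a)
      choose u hu' using hthA
      have hu : ∀ a, W P a = cubeF (u a) := fun a => by rw [W_eq_UF_layerP, hu' a]
      by_cases hcons : ∃ a, u a = u (a + 1)
      · obtain ⟨a, ha⟩ := hcons
        refine ⟨Fin.cons a (u a), ?_⟩
        intro x hx
        rw [mem_cubeF_split] at hx
        obtain ⟨h0, ht⟩ := hx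
        simp only [Fin.cons_zero] at h0
        rw [Fin.tail_cons] at ht
        rw [mem_UF_iff_tail]
        rcases h0 with h0 | h0
        · rw [h0, hu a]; exact ht
        · rw [h0, hu (a+1), ← ha]; exact ht
      push_neg at hcons
      have hWcard : ∀ a, (W P a).card = 2 ^ n := by
        intro a; rw [hdW a, d1 a, one_mul]
      have hcover : ∀ b, ∀ y, y ∈ W P b → y ∈ W P (b+1) ∨ y ∈ W P (b-1) := by
        intro b y hy
        by_cases h : y ∈ W P (b+1)
        · exact Or.inl h
        · exact Or.inr (W_step hpack hy h)
      have hne_prev : ∀ b : ZMod 4, u b ≠ u (b - 1) := by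
        intro b h
        have := hcons (b - 1)
        rw [show b - 1 + 1 = b by ring] at this
        exact this h.symm
      have hkey : ∀ b : ZMod 4, 2 ^ n ≤ (W P b ∩ W P (b+1)).card * 2 ∧
          (W P b ∩ W P (b+1)) ∩ (W P b ∩ W P (b-1)) = ∅ := by
        intro b
        have hXle : (W P b ∩ W P (b+1)).card * 2 ≤ 2 ^ n := by
          rw [hu b, hu (b+1)]
          exact card_inter_le_half (hcons b)
        have hYle : (W P b ∩ W P (b-1)).card * 2 ≤ 2 ^ n := by
          rw [hu b, hu (b-1)]
          exact card_inter_le_half (hne_prev b)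
        have hunion : W P b = (W P b ∩ W P (b+1)) ∪ (W P b ∩ W P (b-1)) := by
          apply Finset.Subset.antisymm
          · intro y hy
            rcases hcover b y hy with h | h
            · exact Finset.mem_union_left _ (Finset.mem_inter.2 ⟨hy, h⟩)
            · exact Finset.mem_union_right _ (Finset.mem_inter.2 ⟨hy, h⟩)
          · intro y hy
            rcases Finset.mem_union.1 hy with h | h
            · exact (Finset.mem_inter.1 h).1
            · exact (Finset.mem_inter.1 h).1
        have hcu : ((W P b ∩ W P (b+1)) ∪ (W P b ∩ W P (b-1))).card = 2 ^ n := by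
          rw [← hunion]; exact hWcard b
        have hsum2 := Finset.card_union_add_card_inter
          (W P b ∩ W P (b+1)) (W P b ∩ W P (b-1))
        rw [hcu] at hsum2
        constructor
        · omega
        · have : ((W P b ∩ W P (b+1)) ∩ (W P b ∩ W P (b-1))).card = 0 := by omega
          exact Finset.card_eq_zero.1 this
      have hscoord : ∀ b : ZMod 4,
          ∃ i, (u (b+1) i = u b i + 1 ∨ u (b+1) i = u b i + 3) ∧
            ∀ k, k ≠ i → u (b+1) k = u b k := by
        intro b
        apply exists_single_coord (hcons b)
        have := (hkey b).1
        rwa [hu b, hu (b+1)] at this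
      choose i hαi hoff using hscoord
      have hdis2 : ∀ b : ZMod 4, W P b ∩ W P (b+2) = ∅ := by
        intro b
        rw [Finset.eq_empty_iff_forall_notMem]
        intro y hy
        obtain ⟨y1, y2⟩ := Finset.mem_inter.1 hy
        by_cases h : y ∈ W P (b+1)
        · have c := (hkey (b+1)).2
          rw [show b+1+1 = b+2 by ring, show b+1-1 = b by ring] at c
          have : y ∈ (W P (b+1) ∩ W P (b+2)) ∩ (W P (b+1) ∩ W P b) :=
            Finset.mem_inter.2 ⟨Finset.mem_inter.2 ⟨h, y2⟩, Finset.mem_inter.2 ⟨h, y1⟩⟩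
          rw [c] at this
          simp at this
        · have y3 : y ∈ W P (b-1) := W_step hpack y1 h
          have c := (hkey (b-1)).2
          rw [show b-1+1 = b by ring, show b-1-1 = b-2 by ring,
            (by decide : ∀ c : ZMod 4, c - 2 = c + 2) b] at c
          have : y ∈ (W P (b-1) ∩ W P b) ∩ (W P (b-1) ∩ W P (b+2)) :=
            Finset.mem_inter.2 ⟨Finset.mem_inter.2 ⟨y3, y1⟩, Finset.mem_inter.2 ⟨y3, y2⟩⟩
          rw [c] at this
          simp at this
      have hdiff2 : ∀ b : ZMod 4, ∃ k, u (b+2) k = u b k + 2 := by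
        intro b
        apply exists_diff_two
        rw [← hu b, ← hu (b+2)]
        exact hdis2 b
      have ichain : ∀ b : ZMod 4, i (b+1) = i b := by
        intro b
        obtain ⟨k, hk⟩ := hdiff2 b
        have hstep1 : ∀ k', k' ≠ i b → u (b+1) k' = u b k' := hoff b
        have hstep2 : ∀ k', k' ≠ i (b+1) → u (b+2) k' = u (b+1) k' := by
          intro k' h
          have := hoff (b+1) k' h
          rwa [show b+1+1 = b+2 by ring] at this
        by_cases h1 : k = i b <;> by_cases h2 : k = i (b+1)
        · rw [← h1, ← h2]
        · exfalso
          have e1 := hstep2 k h2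
          rw [hk] at e1
          subst h1
          rcases hαi b with hα | hα <;> rw [hα] at e1
          · exact (by decide : ∀ c : ZMod 4, ¬(c + 2 = c + 1)) _ e1
          · exact (by decide : ∀ c : ZMod 4, ¬(c + 2 = c + 3)) _ e1
        · exfalso
          have e1 := hstep1 k h1
          have hα := hαi (b+1)
          rw [show b+1+1 = b+2 by ring, ← h2] at hα
          rcases hα with hα | hα <;> rw [e1, hk] at hα
          · exact (by decide : ∀ c : ZMod 4, ¬(c + 2 = c + 1)) _ hα
          · exact (by decide : ∀ c : ZMod 4, ¬(c + 2 = c + 3)) _ hα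
        · exfalso
          have e1 := hstep1 k h1
          have e2 := hstep2 k h2
          rw [e1] at e2
          rw [hk] at e2
          exact (by decide : ∀ c : ZMod 4, ¬(c + 2 = c)) _ e2
      -- constancy of u a at coordinates ≠ i 0
      have hij1 : i (0 + 1 : ZMod 4) = i 0 := ichain 0
      have hij2 : i (0 + 1 + 1 : ZMod 4) = i 0 := by
        have := ichain (0+1); rw [hij1] at this; exact this
      have hconst1 : ∀ j, j ≠ i 0 → u (0+1) j = u 0 j := fun j hj => hoff 0 j hj
      have hconst2 : ∀ j, j ≠ i 0 → u (0+1+1) j = u (0+1) j := by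
        intro j hj
        exact hoff (0+1) j (by rw [hij1]; exact hj)
      have hconst3 : ∀ j, j ≠ i 0 → u (0+1+1+1) j = u (0+1+1) j := by
        intro j hj
        exact hoff (0+1+1) j (by rw [hij2]; exact hj)
      have hconstAll : ∀ j, j ≠ i 0 → ∀ a : ZMod 4, u a j = u 0 j := by
        intro j hj a
        rcases zmod4_cover0 a with h | h | h | h <;> rw [h]
        · exact hconst1 j hj
        · rw [hconst2 j hj, hconst1 j hj]
        · rw [hconst3 j hj, hconst2 j hj, hconst1 j hj]
      by_cases hn2 : 2 ≤ n
      · -- a middle coordinate exists, transport to direction 0 and use caseI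
        set j : Fin n := if i 0 = ⟨0, by omega⟩ then ⟨1, by omega⟩ else ⟨0, by omega⟩ with hjdef
        have hji : j ≠ i 0 := by
          rw [hjdef]
          split_ifs with h
          · rw [h]
            intro hh
            simp [Fin.mk.injEq] at hh
          · intro hh
            exact h hh.symm
        have hUj : ∀ x, x ∈ UF P → x j.succ = u 0 j ∨ x j.succ = u 0 j + 1 := by
          intro x hx
          rw [mem_UF_iff_tail] at hx
          rw [hu (x 0)] at hx
          have hm := mem_cubeF.1 hx j
          have ht : Fin.tail x j = x j.succ := rfl
          rw [ht, hconstAll j hji (x 0)] at hm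
          exact hm
        set σ : Equiv.Perm (Fin (n+1)) := Equiv.swap 0 j.succ with hσ
        have hσsymm : σ.symm = σ := by rw [hσ]; exact Equiv.symm_swap _ _
        set P' := P.image (fun v => v ∘ σ) with hP'def
        have hP' : IsPacking P' := isPacking_image σ hpack
        have hcard' : P'.card + 2 = 2 ^ (n+1) := by
          rw [hP'def, Finset.card_image_of_injective _ (comp_injective σ)]
          exact hcard
        have hW' : W P' (u 0 j + 2) = ∅ := by
          rw [Finset.eq_empty_iff_forall_notMem]
          intro y hy
          rw [mem_W, mem_UF_image] at hy
          have h2 := hUj _ hy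
          have h3 : (Fin.cons (u 0 j + 2) y ∘ ⇑σ.symm) j.succ = u 0 j + 2 := by
            rw [hσsymm, hσ]
            simp [Function.comp, Equiv.swap_apply_right]
          rw [h3] at h2
          exact (by decide : ∀ c : ZMod 4, ¬(c + 2 = c ∨ c + 2 = c + 1)) _ h2
        obtain ⟨w', hw'⟩ := caseI (thmA n) ih hP' hcard' ⟨_, hW'⟩
        refine ⟨w' ∘ σ, ?_⟩
        intro x hx
        rw [mem_cubeF_comp] at hx
        have hx2 := hw' hx
        rw [mem_UF_image] at hx2
        have hxx : (x ∘ ⇑σ.symm) ∘ ⇑σ.symm = x := by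
          funext k
          simp [Function.comp, hσsymm, hσ, Equiv.swap_apply_self]
        rwa [hxx] at hx2
      · -- n = 1 : direct contradiction
        have hn : n = 1 := by omega
        subst hn
        exfalso
        obtain ⟨v, hv⟩ := hPne
        have hvU : v ∉ UF P := by
          rw [mem_UF]
          push_neg
          exact ⟨v, hv, self_mem_cubeF v⟩
        have hvW : Fin.tail v ∉ cubeF (u (v 0)) := by
          rw [← hu (v 0)]
          intro h
          exact hvU (mem_UF_iff_tail.2 h)
        rw [mem_cubeF] at hvW
        push_neg at hvW
        obtain ⟨k, hk1, hk2⟩ := hvW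
        have hkeq : k = i (v 0) := Subsingleton.elim _ _
        have hα0 := hαi (v 0)
        rw [← hkeq] at hα0
        have hnotc : ¬(Fin.tail v k = u (v 0) k ∨ Fin.tail v k = u (v 0) k + 1) := by
          rintro (h | h)
          · exact hk1 h
          · exact hk2 h
        have hαgen : ∃ α : ZMod 4, (α = 1 ∨ α = 3) ∧ u (v 0 + 1) k = u (v 0) k + α := by
          rcases hα0 with h | h
          · exact ⟨1, Or.inl rfl, h⟩
          · exact ⟨3, Or.inr rfl, h⟩
        obtain ⟨α, hα13, hα⟩ := hαgen
        rcases dec_n1 (Fin.tail v k) (u (v 0) k) α hα13 hnotc with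
          ⟨y0, hy0t, hy0c⟩ | ⟨y0, hy0t, hy0c⟩
        · -- the point (v 0, y0) is both in cube v and uncovered
          set x : Fin 2 → ZMod 4 := Fin.cons (v 0) (fun _ => y0) with hxdef
          have hxcube : x ∈ cubeF v := by
            rw [mem_cubeF_split]
            constructor
            · left; rw [hxdef, Fin.cons_zero]
            · rw [hxdef, Fin.tail_cons, mem_cubeF]
              intro k'
              rw [Subsingleton.elim k' k]
              exact hy0t
          have hxU : x ∈ UF P := by
            rw [mem_UF_iff_tail]
            have h0 : x 0 = v 0 := by rw [hxdef, Fin.cons_zero]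
            rw [h0, hu (v 0), hxdef, Fin.tail_cons, mem_cubeF]
            intro k'
            rw [Subsingleton.elim k' k]
            exact hy0c
          exact mem_UF.1 hxU v hv hxcube
        · set x : Fin 2 → ZMod 4 := Fin.cons (v 0 + 1) (fun _ => y0) with hxdef
          have hxcube : x ∈ cubeF v := by
            rw [mem_cubeF_split]
            constructor
            · right; rw [hxdef, Fin.cons_zero]
            · rw [hxdef, Fin.tail_cons, mem_cubeF]
              intro k'
              rw [Subsingleton.elim k' k]
              exact hy0t
          have hxU : x ∈ UF P := by
            rw [mem_UF_iff_tail]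
            have h0 : x 0 = v 0 + 1 := by rw [hxdef, Fin.cons_zero]
            rw [h0, hu (v 0 + 1), hxdef, Fin.tail_cons, mem_cubeF]
            intro k'
            rw [Subsingleton.elim k' k, hα]
            exact hy0c
          exact mem_UF.1 hxU v hv hxcube


end CubePack

theorem packing_card_sub_two_extensible {n : ℕ} (P : Finset (Fin n → ZMod 4))
    (hP : (P : Set (Fin n → ZMod 4)).Pairwise fun v w => Disjoint (cube v) (cube w))
    (hcard : P.card + 2 = 2 ^ n) :
    ∃ w : Fin n → ZMod 4, ∀ v ∈ P, Disjoint (cube v) (cube w) := by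
  obtain ⟨w, hw⟩ := CubePack.thmB n P hP hcard
  refine ⟨w, fun v hv => ?_⟩
  rw [Set.disjoint_right]
  intro x hxw hxv
  have hx : x ∈ CubePack.cubeF w := CubePack.mem_cubeF.2 hxw
  have := CubePack.mem_UF.1 (hw hx) v hv
  exact this (CubePack.mem_cubeF.2 hxv)
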